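/- arXiv:2206.09238 — 2 statements merged into one kernel-verified Lean document; each statement's English description precedes it below -/
import Mathlib

section
/- Let g: ℝ^d → ℝ be differentiable and μ-smooth with μ < λ, and let δ*(x) denote the unique maximizer of δ ↦ g(x+δ) - (λ/2)‖δ‖². Then the map x ↦ δ*(x) is Lipschitz with constant at most μ/(λ - μ): ‖δ*(x) - δ*(x')‖₂ ≤ (μ/(λ-μ))‖x - x'‖₂. -/
open InnerProductSpace

/-- If `g` is differentiable and `μ`-smooth with `μ < lam`, and `δstar x` is the unique
maximizer of `δ ↦ g(x+δ) - (lam/2)‖δ‖²`, then `x ↦ δstar x` is `(μ/(lam-μ))`-Lipschitz. -/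
theorem optimal_attack_lipschitz (d : ℕ)
    (g : EuclideanSpace ℝ (Fin d) → ℝ) (lam μ : ℝ)
    (hg : Differentiable ℝ g) (hμ0 : 0 ≤ μ) (hμ : μ < lam)
    (hsmooth : ∀ y y' : EuclideanSpace ℝ (Fin d),
      ‖gradient g y - gradient g y'‖ ≤ μ * ‖y - y'‖)
    (δstar : EuclideanSpace ℝ (Fin d) → EuclideanSpace ℝ (Fin d))
    (hmax : ∀ x : EuclideanSpace ℝ (Fin d),
      IsMaxOn (fun δ : EuclideanSpace ℝ (Fin d) => g (x + δ) - lam / 2 * ‖δ‖ ^ 2)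
        Set.univ (δstar x)) :
    ∀ x x' : EuclideanSpace ℝ (Fin d),
      ‖δstar x - δstar x'‖ ≤ μ / (lam - μ) * ‖x - x'‖ := by
  have key : ∀ x : EuclideanSpace ℝ (Fin d),
      gradient g (x + δstar x) = lam • δstar x := by
    intro x
    set a := δstar x with ha
    -- derivative of the objective at a
    have h1 : HasFDerivAt (fun δ : EuclideanSpace ℝ (Fin d) => g (x + δ))
        (fderiv ℝ g (x + a)) a := by
      have := (hg (x + a)).hasFDerivAt.comp a
        ((hasFDerivAt_id a).const_add x)
      simp at this; exact this
    have h2 : HasFDerivAt (fun δ : EuclideanSpace ℝ (Fin d) => lam / 2 * ‖δ‖ ^ 2)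
        ((lam / 2) • (2 • (innerSL ℝ a))) a := by
      have hn : HasFDerivAt (fun δ : EuclideanSpace ℝ (Fin d) => ‖δ‖ ^ 2)
          (2 • ((innerSL ℝ a).comp (ContinuousLinearMap.id ℝ _))) a := by
        simpa using (hasFDerivAt_id a).norm_sq
      simpa using hn.const_mul (lam / 2)
    have hD : HasFDerivAt (fun δ : EuclideanSpace ℝ (Fin d) =>
        g (x + δ) - lam / 2 * ‖δ‖ ^ 2)
        (fderiv ℝ g (x + a) - (lam / 2) • (2 • (innerSL ℝ a))) a := h1.sub h2
    have hloc : IsLocalMax (fun δ : EuclideanSpace ℝ (Fin d) =>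
        g (x + δ) - lam / 2 * ‖δ‖ ^ 2) a :=
      (hmax x).isLocalMax (by simp)
    have hzero := hloc.hasFDerivAt_eq_zero hD
    have hfd : fderiv ℝ g (x + a) = lam • (innerSL ℝ a) := by
      have : (lam / 2) • (2 • (innerSL ℝ a)) = lam • (innerSL ℝ a) := by
        ext y
        simp [ContinuousLinearMap.smul_apply]
        ring
      rw [sub_eq_zero] at hzero
      rw [hzero, this]
    have htd : (toDual ℝ (EuclideanSpace ℝ (Fin d))) (lam • a) = lam • (innerSL ℝ a) := by
      ext y
      simp [inner_smul_left]
    rw [gradient, hfd, ← htd, LinearIsometryEquiv.symm_apply_apply]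
  intro x x'
  set a := δstar x
  set b := δstar x'
  have h1 : lam * ‖a - b‖ ≤ μ * (‖x - x'‖ + ‖a - b‖) := by
    have := hsmooth (x + a) (x' + b)
    rw [key x, key x', ← smul_sub, norm_smul] at this
    have hlam : 0 < lam := lt_of_le_of_lt hμ0 hμ
    calc lam * ‖a - b‖ = ‖lam‖ * ‖a - b‖ := by rw [Real.norm_eq_abs, abs_of_pos hlam]
      _ ≤ μ * ‖x + a - (x' + b)‖ := this
      _ ≤ μ * (‖x - x'‖ + ‖a - b‖) := by
          apply mul_le_mul_of_nonneg_left _ hμ0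
          have : x + a - (x' + b) = (x - x') + (a - b) := by abel
          rw [this]; exact norm_add_le _ _
  have h2 : (lam - μ) * ‖a - b‖ ≤ μ * ‖x - x'‖ := by nlinarith
  rw [div_mul_eq_mul_div, le_div_iff₀ (by linarith)]
  linarith
end

section
/- Let g: ℝ^d → ℝ be differentiable and μ-smooth with μ < λ, and let δ*(x) be the unique maximizer of δ ↦ g(x+δ) - (λ/2)‖δ‖². Then the perturbed-input map x ↦ x + δ*(x) is Lipschitz with constant at most λ/(λ - μ). -/
open InnerProductSpace

lemma foc_gradient (d : ℕ)
    (g : EuclideanSpace ℝ (Fin d) → ℝ) (lam : ℝ)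
    (hg : Differentiable ℝ g)
    (δstar : EuclideanSpace ℝ (Fin d) → EuclideanSpace ℝ (Fin d))
    (hmax : ∀ x : EuclideanSpace ℝ (Fin d),
      IsMaxOn (fun δ : EuclideanSpace ℝ (Fin d) => g (x + δ) - lam / 2 * ‖δ‖ ^ 2)
        Set.univ (δstar x)) (x : EuclideanSpace ℝ (Fin d)) :
    gradient g (x + δstar x) = lam • δstar x := by
  set δ0 := δstar x with hδ0
  set y := x + δ0 with hy
  -- derivative of the objective at δ0
  have h1 : HasFDerivAt (fun δ : EuclideanSpace ℝ (Fin d) => g (x + δ))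
      (fderiv ℝ g y) δ0 := by
    have := (hg y).hasFDerivAt.comp δ0 ((hasFDerivAt_id δ0).const_add x)
    simpa [Function.comp_def] using this
  have h2 : HasFDerivAt (fun δ : EuclideanSpace ℝ (Fin d) => ‖δ‖ ^ 2)
      (2 • (innerSL ℝ δ0)) δ0 := (hasStrictFDerivAt_norm_sq δ0).hasFDerivAt
  have h3 : HasFDerivAt (fun δ : EuclideanSpace ℝ (Fin d) => g (x + δ) - lam / 2 * ‖δ‖ ^ 2)
      (fderiv ℝ g y - (lam / 2) • (2 • (innerSL ℝ δ0))) δ0 :=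
    h1.sub (h2.const_smul (lam / 2))
  have hloc : IsLocalMax (fun δ : EuclideanSpace ℝ (Fin d) => g (x + δ) - lam / 2 * ‖δ‖ ^ 2)
      δ0 := (hmax x).isLocalMax Filter.univ_mem
  have hzero := hloc.fderiv_eq_zero
  have h4 : fderiv ℝ g y - (lam / 2) • (2 • (innerSL ℝ δ0)) = 0 := by
    rw [← h3.fderiv]; exact hzero
  have hgrad : HasGradientAt g (gradient g y) y := (hg y).hasGradientAt
  have hfd : fderiv ℝ g y = toDualMap ℝ _ (gradient g y) :=
    (hasGradientAt_iff_hasFDerivAt.mp hgrad).fderiv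
  apply ext_inner_right ℝ
  intro v
  have := congrArg (fun L => L v) h4
  simp only [ContinuousLinearMap.sub_apply, ContinuousLinearMap.smul_apply,
    ContinuousLinearMap.zero_apply, hfd] at this
  have hdual : (toDualMap ℝ (EuclideanSpace ℝ (Fin d)) (gradient g y)) v
      = inner ℝ (gradient g y) v := rfl
  rw [hdual] at this
  simp only [smul_eq_mul, ContinuousLinearMap.smul_apply, innerSL_apply_apply, nsmul_eq_mul,
    Nat.cast_ofNat] at this
  rw [real_inner_smul_left]
  linarith

/-- If `g` is differentiable and `μ`-smooth with `μ < lam`, and `δstar x` is the unique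
maximizer of `δ ↦ g(x+δ) - (lam/2)‖δ‖²`, then `x ↦ x + δstar x` is
`(lam/(lam-μ))`-Lipschitz. -/
theorem perturbed_input_lipschitz (d : ℕ)
    (g : EuclideanSpace ℝ (Fin d) → ℝ) (lam μ : ℝ)
    (hg : Differentiable ℝ g) (hμ0 : 0 ≤ μ) (hμ : μ < lam)
    (hsmooth : ∀ y y' : EuclideanSpace ℝ (Fin d),
      ‖gradient g y - gradient g y'‖ ≤ μ * ‖y - y'‖)
    (δstar : EuclideanSpace ℝ (Fin d) → EuclideanSpace ℝ (Fin d))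
    (hmax : ∀ x : EuclideanSpace ℝ (Fin d),
      IsMaxOn (fun δ : EuclideanSpace ℝ (Fin d) => g (x + δ) - lam / 2 * ‖δ‖ ^ 2)
        Set.univ (δstar x)) :
    ∀ x x' : EuclideanSpace ℝ (Fin d),
      ‖(x + δstar x) - (x' + δstar x')‖ ≤ lam / (lam - μ) * ‖x - x'‖ := by
  intro x x'
  have hlam : 0 < lam := lt_of_le_of_lt hμ0 hμ
  set z := x + δstar x with hz
  set z' := x' + δstar x' with hz'
  have h1 : gradient g z = lam • δstar x := foc_gradient d g lam hg δstar hmax x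
  have h2 : gradient g z' = lam • δstar x' := foc_gradient d g lam hg δstar hmax x'
  have key : lam • (z - z') = lam • (x - x') + (gradient g z - gradient g z') := by
    rw [h1, h2, hz, hz']
    module
  have hnorm : lam * ‖z - z'‖ ≤ lam * ‖x - x'‖ + μ * ‖z - z'‖ := by
    calc lam * ‖z - z'‖ = ‖lam • (z - z')‖ := by
          rw [norm_smul, Real.norm_eq_abs, abs_of_pos hlam]
      _ = ‖lam • (x - x') + (gradient g z - gradient g z')‖ := by rw [key]
      _ ≤ ‖lam • (x - x')‖ + ‖gradient g z - gradient g z'‖ := norm_add_le _ _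
      _ ≤ lam * ‖x - x'‖ + μ * ‖z - z'‖ := by
          gcongr
          · rw [norm_smul, Real.norm_eq_abs, abs_of_pos hlam]
          · exact hsmooth z z'
  rw [div_mul_eq_mul_div, le_div_iff₀ (by linarith)]
  nlinarith [norm_nonneg (z - z'), norm_nonneg (x - x')]
end
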